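/- Every inp-minimal ordered group is abelian. That is, let G be a group equipped with a linear order ≤ such that a ≤ b implies c·a·d ≤ c·b·d for all a, b, c, d ∈ G, regarded as a structure in the language of ordered groups {·, ⁻¹, 1, ≤}. If this structure is inp-minimal, then G is commutative. -/

import Mathlib

open FirstOrder FirstOrder.Language

universe u v w

/-- `N` carries an inp-pattern of length two (in a single free variable). -/
def HasInpPattern (L : FirstOrder.Language.{v, w}) (N : Type*) [L.Structure N] : Prop :=
  ∃ (m₁ m₂ k₁ k₂ : ℕ) (φ : L.Formula (Unit ⊕ Fin m₁)) (ψ : L.Formula (Unit ⊕ Fin m₂))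
    (a : ℕ → Fin m₁ → N) (b : ℕ → Fin m₂ → N),
    2 ≤ k₁ ∧ 2 ≤ k₂ ∧
    (∀ (c : N) (s : Finset ℕ),
      (∀ i ∈ s, φ.Realize (Sum.elim (fun _ => c) (a i))) → s.card < k₁) ∧
    (∀ (c : N) (s : Finset ℕ),
      (∀ j ∈ s, ψ.Realize (Sum.elim (fun _ => c) (b j))) → s.card < k₂) ∧
    (∀ i j : ℕ, ∃ c : N,
      φ.Realize (Sum.elim (fun _ => c) (a i)) ∧ ψ.Realize (Sum.elim (fun _ => c) (b j)))

/-- `M` is inp-minimal: no structure elementarily equivalent to `M` carries an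
inp-pattern of length two in a single free variable. -/
def IsInpMinimal (L : FirstOrder.Language.{v, w}) (M : Type u) [L.Structure M] : Prop :=
  ∀ (N : Type (max u v w)) (S : L.Structure N),
    L.completeTheory M = @Language.completeTheory L N S → ¬ @HasInpPattern L N S

/-- The first-order language of ordered groups `{·, ⁻¹, 1, ≤}`. -/
def ogLang : Language where
  Functions := fun n =>
    match n with
    | 0 => Unit
    | 1 => Unit
    | 2 => Unit
    | _ => Empty
  Relations := fun n =>
    match n with
    | 2 => Unit
    | _ => Empty

/-- A group with an order, regarded as an `ogLang`-structure. -/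
instance ogLangStructure (G : Type u) [Group G] [LE G] : ogLang.Structure G where
  funMap {n} f :=
    match n, f with
    | 0, _ => fun _ => (1 : G)
    | 1, _ => fun x => (x 0)⁻¹
    | 2, _ => fun x => x 0 * x 1
    | (_ + 3), f => Empty.elim f
  RelMap {n} r :=
    match n, r with
    | 0, r => Empty.elim r
    | 1, r => Empty.elim r
    | 2, _ => fun x => x 0 ≤ x 1
    | (_ + 3), r => Empty.elim r


section Aux

variable {G : Type u} [Group G] [LinearOrder G]

lemma og_mul_lt_mul_left (hord : ∀ a b c d : G, a ≤ b → c * a * d ≤ c * b * d)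
    {x y : G} (h : x < y) (c : G) : c * x < c * y := by
  have h1 : c * x * 1 ≤ c * y * 1 := hord x y c 1 h.le
  simp only [mul_one] at h1
  exact lt_of_le_of_ne h1 (fun he => absurd (mul_left_cancel he) h.ne)

lemma og_mul_lt_mul_right (hord : ∀ a b c d : G, a ≤ b → c * a * d ≤ c * b * d)
    {x y : G} (h : x < y) (c : G) : x * c < y * c := by
  have h1 : 1 * x * c ≤ 1 * y * c := hord x y 1 c h.le
  simp only [one_mul] at h1
  exact lt_of_le_of_ne h1 (fun he => absurd (mul_right_cancel he) h.ne)

lemma og_pow_lt_pow (hord : ∀ a b c d : G, a ≤ b → c * a * d ≤ c * b * d)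
    {x y : G} (h : x < y) : ∀ m : ℕ, x ^ (m + 1) < y ^ (m + 1)
  | 0 => by simpa using h
  | (m + 1) => by
    have ih := og_pow_lt_pow hord h m
    calc x ^ (m + 2) = x ^ (m + 1) * x := pow_succ x (m + 1)
      _ < y ^ (m + 1) * x := og_mul_lt_mul_right hord ih x
      _ < y ^ (m + 1) * y := og_mul_lt_mul_left hord h _
      _ = y ^ (m + 2) := (pow_succ y (m + 1)).symm

omit [LinearOrder G] in
lemma og_conj_pow (x y : G) : ∀ m : ℕ, (y⁻¹ * x * y) ^ m = y⁻¹ * x ^ m * y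
  | 0 => by simp
  | (m + 1) => by
    rw [pow_succ, og_conj_pow x y m, pow_succ]
    group

/-- In an ordered group, if a positive power of `x` commutes with `y`, then `x` does. -/
lemma og_commute_of_pow_commute (hord : ∀ a b c d : G, a ≤ b → c * a * d ≤ c * b * d)
    {x y : G} (m : ℕ) (h : x ^ (m + 1) * y = y * x ^ (m + 1)) : x * y = y * x := by
  have hconj : (y⁻¹ * x * y) ^ (m + 1) = x ^ (m + 1) := by
    rw [og_conj_pow, mul_assoc, h, inv_mul_cancel_left]
  rcases lt_trichotomy (y⁻¹ * x * y) x with hlt | heq | hgt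
  · exact absurd (hconj ▸ og_pow_lt_pow hord hlt m) (lt_irrefl _)
  · have : x * y = y * (y⁻¹ * x * y) := by group
    rw [heq] at this
    exact this
  · exact absurd (hconj ▸ og_pow_lt_pow hord hgt m) (lt_irrefl _)

/-- Multiplication term in `ogLang`. -/
def tMul (t₁ t₂ : ogLang.Term (Unit ⊕ Fin 2)) : ogLang.Term (Unit ⊕ Fin 2) :=
  Term.func (l := 2) (show ogLang.Functions 2 from Unit.unit) ![t₁, t₂]

def tX : ogLang.Term (Unit ⊕ Fin 2) := Term.var (Sum.inl ())
def tY : ogLang.Term (Unit ⊕ Fin 2) := Term.var (Sum.inr 0)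
def tZ : ogLang.Term (Unit ⊕ Fin 2) := Term.var (Sum.inr 1)

/-- Formula: (x * y) * z = z * (x * y). -/
def ogφ : ogLang.Formula (Unit ⊕ Fin 2) :=
  Term.equal (tMul (tMul tX tY) tZ) (tMul tZ (tMul tX tY))

/-- Formula: (y * x) * z = z * (y * x). -/
def ogψ : ogLang.Formula (Unit ⊕ Fin 2) :=
  Term.equal (tMul (tMul tY tX) tZ) (tMul tZ (tMul tY tX))

lemma realize_tMul (v : Unit ⊕ Fin 2 → G) (t₁ t₂ : ogLang.Term (Unit ⊕ Fin 2)) :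
    Term.realize v (tMul t₁ t₂) = Term.realize v t₁ * Term.realize v t₂ := rfl

lemma realize_ogφ (c : G) (p : Fin 2 → G) :
    ogφ.Realize (Sum.elim (fun _ => c) p) ↔ (c * p 0) * p 1 = p 1 * (c * p 0) := by
  simp only [ogφ, Formula.realize_equal, realize_tMul, tX, tY, tZ, Term.realize_var,
    Sum.elim_inl, Sum.elim_inr]

lemma realize_ogψ (c : G) (p : Fin 2 → G) :
    ogψ.Realize (Sum.elim (fun _ => c) p) ↔ (p 0 * c) * p 1 = p 1 * (p 0 * c) := by
  simp only [ogψ, Formula.realize_equal, realize_tMul, tX, tY, tZ, Term.realize_var,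
    Sum.elim_inl, Sum.elim_inr]

/-- Key step for row 1: two distinct indices in the same row force `a` and `b` to commute. -/
lemma og_row1_incon (hord : ∀ a b c d : G, a ≤ b → c * a * d ≤ c * b * d)
    {a b : G} (hab : a * b ≠ b * a) {c : G} {j j' : ℕ} (hlt : j' < j)
    (H1 : (c * (b ^ j)⁻¹) * a = a * (c * (b ^ j)⁻¹))
    (H2 : (c * (b ^ j')⁻¹) * a = a * (c * (b ^ j')⁻¹)) : False := by
  obtain ⟨m, rfl⟩ : ∃ m : ℕ, j = j' + (m + 1) :=
    ⟨j - j' - 1, by omega⟩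
  have h1 : Commute (c * (b ^ (j' + (m + 1)))⁻¹) a := H1
  have h2 : Commute (c * (b ^ j')⁻¹) a := H2
  have h3 : Commute ((c * (b ^ (j' + (m + 1)))⁻¹)⁻¹ * (c * (b ^ j')⁻¹)) a :=
    h1.inv_left.mul_left h2
  have heq : (c * (b ^ (j' + (m + 1)))⁻¹)⁻¹ * (c * (b ^ j')⁻¹) = b ^ (m + 1) := by
    have : b ^ (j' + (m + 1)) = b ^ (m + 1) * b ^ j' := by
      rw [← pow_add]; ring_nf
    rw [this]; group
  rw [heq] at h3
  exact hab (og_commute_of_pow_commute hord m h3.eq).symm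

/-- Key step for row 2. -/
lemma og_row2_incon (hord : ∀ a b c d : G, a ≤ b → c * a * d ≤ c * b * d)
    {a b : G} (hab : a * b ≠ b * a) {c : G} {i i' : ℕ} (hlt : i' < i)
    (H1 : ((a ^ i)⁻¹ * c) * b = b * ((a ^ i)⁻¹ * c))
    (H2 : ((a ^ i')⁻¹ * c) * b = b * ((a ^ i')⁻¹ * c)) : False := by
  obtain ⟨m, rfl⟩ : ∃ m : ℕ, i = i' + (m + 1) :=
    ⟨i - i' - 1, by omega⟩
  have h1 : Commute ((a ^ (i' + (m + 1)))⁻¹ * c) b := H1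
  have h2 : Commute ((a ^ i')⁻¹ * c) b := H2
  have h3 : Commute (((a ^ (i' + (m + 1)))⁻¹ * c) * ((a ^ i')⁻¹ * c)⁻¹) b :=
    h1.mul_left h2.inv_left
  have heq : ((a ^ (i' + (m + 1)))⁻¹ * c) * ((a ^ i')⁻¹ * c)⁻¹ = (a ^ (m + 1))⁻¹ := by
    rw [pow_add]; group
  rw [heq] at h3
  exact hab (og_commute_of_pow_commute hord m (Commute.inv_left_iff.mp h3).eq)

end Aux

theorem statement_1 (G : Type u) [Group G] [LinearOrder G]
    (hord : ∀ a b c d : G, a ≤ b → c * a * d ≤ c * b * d)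
    (hG : IsInpMinimal ogLang G) :
    ∀ a b : G, a * b = b * a := by
  intro a b
  by_contra hab
  refine hG G (ogLangStructure G) rfl
    ⟨2, 2, 2, 2, ogφ, ogψ, (fun j => ![(b ^ j)⁻¹, a]), (fun i => ![(a ^ i)⁻¹, b]),
      le_refl 2, le_refl 2, ?_, ?_, ?_⟩
  · intro c s hs
    by_contra hcard
    push_neg at hcard
    obtain ⟨j, hj, j', hj', hne⟩ := Finset.one_lt_card.mp hcard
    have H1 := (realize_ogφ c _).mp (hs j hj)
    have H2 := (realize_ogφ c _).mp (hs j' hj')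
    simp only [Matrix.cons_val_zero, Matrix.cons_val_one, Matrix.head_cons] at H1 H2
    rcases (Ne.lt_or_gt hne) with h | h
    · exact og_row1_incon hord hab h H2 H1
    · exact og_row1_incon hord hab h H1 H2
  · intro c s hs
    by_contra hcard
    push_neg at hcard
    obtain ⟨i, hi, i', hi', hne⟩ := Finset.one_lt_card.mp hcard
    have H1 := (realize_ogψ c _).mp (hs i hi)
    have H2 := (realize_ogψ c _).mp (hs i' hi')
    simp only [Matrix.cons_val_zero, Matrix.cons_val_one, Matrix.head_cons] at H1 H2
    rcases (Ne.lt_or_gt hne) with h | h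
    · exact og_row2_incon hord hab h H2 H1
    · exact og_row2_incon hord hab h H1 H2
  · intro i j
    refine ⟨a ^ j * b ^ i, ?_, ?_⟩
    · rw [realize_ogφ]
      simp only [Matrix.cons_val_zero, Matrix.cons_val_one, Matrix.head_cons,
        mul_inv_cancel_right]
      exact ((Commute.refl a).pow_left j).eq
    · rw [realize_ogψ]
      simp only [Matrix.cons_val_zero, Matrix.cons_val_one, Matrix.head_cons]
      rw [inv_mul_cancel_left]
      exact ((Commute.refl b).pow_left i).eq
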